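/- Let A and B be objects of a category C (with no enrichment assumed), and suppose (A⊕B, p_A, p_B, i_A, i_B) is a biproduct in the sense that (A⊕B, p_A, p_B) is a product, (A⊕B, i_A, i_B) is a coproduct, p_A ∘ i_A = id_A, p_B ∘ i_B = id_B, and i_A∘p_A∘i_B∘p_B = i_B∘p_B∘i_A∘p_A. Then p_B ∘ i_A : A ⟶ B is a zero morphism, i.e. both constant and coconstant. -/

import Mathlib

open CategoryTheory CategoryTheory.Limits

/-- `z` is constant. -/
def IsConstantMor {C : Type*} [Category C] {A B : C} (z : A ⟶ B) : Prop :=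
  ∀ {X : C} (f g : X ⟶ A), f ≫ z = g ≫ z

/-- `z` is coconstant. -/
def IsCoconstantMor {C : Type*} [Category C] {A B : C} (z : A ⟶ B) : Prop :=
  ∀ {X : C} (f g : B ⟶ X), z ≫ f = z ≫ g

/-- In a biproduct (defined without any enrichment: a product and a coproduct with
`p_A ∘ i_A = id`, `p_B ∘ i_B = id` and commuting induced idempotents), the
composite `p_B ∘ i_A` is a zero morphism. -/
theorem biproduct_mixed_composite_is_zero {C : Type*} [Category C]
    {A B P : C} (pA : P ⟶ A) (pB : P ⟶ B) (iA : A ⟶ P) (iB : B ⟶ P)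
    (hprod : IsLimit (BinaryFan.mk pA pB))
    (hcoprod : IsColimit (BinaryCofan.mk iA iB))
    (h1 : iA ≫ pA = 𝟙 A) (h2 : iB ≫ pB = 𝟙 B)
    (h3 : (pB ≫ iB) ≫ (pA ≫ iA) = (pA ≫ iA) ≫ (pB ≫ iB)) :
    IsConstantMor (iA ≫ pB) ∧ IsCoconstantMor (iA ≫ pB) := by
  -- Key lemma 1: for any f : X ⟶ A and g : X ⟶ B,
  --   f ≫ iA ≫ pB = g ≫ iB ≫ pA ≫ iA ≫ pB
  have key1 : ∀ {X : C} (f : X ⟶ A) (g : X ⟶ B),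
      f ≫ iA ≫ pB = g ≫ iB ≫ pA ≫ iA ≫ pB := by
    intro X f g
    set t := hprod.lift (BinaryFan.mk f g) with ht
    have hf : t ≫ pA = f := hprod.fac (BinaryFan.mk f g) ⟨WalkingPair.left⟩
    have hg : t ≫ pB = g := hprod.fac (BinaryFan.mk f g) ⟨WalkingPair.right⟩
    have h := congrArg (fun m => t ≫ m ≫ pB) h3.symm
    simp only [Category.assoc] at h
    rw [← Category.assoc t pA, hf, ← Category.assoc t pB, hg] at h
    rw [h2, Category.comp_id] at h
    exact h
  -- Key lemma 2: for any b : B ⟶ Y and a : A ⟶ Y,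
  --   iA ≫ pB ≫ b = iA ≫ pB ≫ iB ≫ pA ≫ a
  have key2 : ∀ {Y : C} (b : B ⟶ Y) (a : A ⟶ Y),
      iA ≫ pB ≫ b = iA ≫ pB ≫ iB ≫ pA ≫ a := by
    intro Y b a
    set s : P ⟶ Y := hcoprod.desc (BinaryCofan.mk a b) with hs
    have ha : iA ≫ s = a := hcoprod.fac (BinaryCofan.mk a b) ⟨WalkingPair.left⟩
    have hb : iB ≫ s = b := hcoprod.fac (BinaryCofan.mk a b) ⟨WalkingPair.right⟩
    have h := congrArg (fun m => iA ≫ m ≫ s) h3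
    simp only [Category.assoc] at h
    rw [hb, ha] at h
    rw [← Category.assoc iA pA, h1, Category.id_comp] at h
    exact h.symm
  constructor
  · intro X f g
    rw [key1 f (f ≫ iA ≫ pB), key1 g (f ≫ iA ≫ pB)]
  · intro Y u v
    have hu := key2 u (iA ≫ pB ≫ u)
    have hv := key2 v (iA ≫ pB ≫ u)
    simp only [Category.assoc] at hu hv ⊢
    rw [hu, hv]
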